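/- Let U be a set of affine equations with W = span(U), and let C be a non-tautological linear clause with V = ⟨C⟩ such that f+𝟏 ∉ W for every f ∈ V (i.e., U does not logically imply C), and such that there exist g, h ∈ V with g ∉ W, h ∉ W, and g+h ∉ W. Then the number of f ∈ V with f ∉ W and f+𝟏 ∉ W is at least (3/4)·|V|; equivalently, a uniformly random equation f sampled from V satisfies f ∉ span(U) and f+𝟏 ∉ span(U) with probability at least 3/4. -/

import Mathlib

namespace XorSAT

/-- An affine equation over `n` Boolean variables: the coefficients of the `n`
variables together with a right-hand side, i.e. a vector in `F₂^(n+1)`. -/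
abbrev Eqn (n : ℕ) : Type := (Fin n → ZMod 2) × ZMod 2

/-- The equation `𝟏`, i.e. `0 = 1`, satisfied by no assignment. -/
def oneEq (n : ℕ) : Eqn n := (0, 1)

/-- An assignment `x` satisfies the equation `(a, b)` iff `∑ aᵢ xᵢ = b`. -/
def Sats {n : ℕ} (x : Fin n → ZMod 2) (e : Eqn n) : Prop :=
  (∑ i, e.1 i * x i) = e.2

/-- A linear clause: a (finite) disjunction of affine equations. -/
abbrev Clause (n : ℕ) : Type := Finset (Eqn n)

/-- An assignment satisfies a linear clause iff it satisfies some equation in it. -/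
def SatsClause {n : ℕ} (x : Fin n → ZMod 2) (C : Clause n) : Prop :=
  ∃ e ∈ C, Sats x e

/-- A clause is non-tautological if some assignment falsifies every equation of it. -/
def NonTaut {n : ℕ} (C : Clause n) : Prop :=
  ∃ x : Fin n → ZMod 2, ∀ e ∈ C, ¬ Sats x e

/-- The linear negation `⟨C⟩` of a clause `C = f₁ ∨ … ∨ f_m`:
the `F₂`-span of `f₁ + 𝟏, …, f_m + 𝟏`. -/
def linneg {n : ℕ} (C : Clause n) : Submodule (ZMod 2) (Eqn n) :=
  Submodule.span (ZMod 2) ((fun e => e + oneEq n) '' (C : Set (Eqn n)))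

/-- A set of equations is consistent if some assignment satisfies all of them. -/
def Consistent {n : ℕ} (U : Set (Eqn n)) : Prop :=
  ∃ x : Fin n → ZMod 2, ∀ e ∈ U, Sats x e

/-- The `F₂`-linear span of a set of equations, as a submodule. -/
def spn {n : ℕ} (U : Set (Eqn n)) : Submodule (ZMod 2) (Eqn n) :=
  Submodule.span (ZMod 2) U


/-- Rejection sampling of decision equations: if `U` does not
imply the non-tautological clause `C` (no `f ∈ ⟨C⟩` has `f+𝟏 ∈ span U`) and
`⟨C⟩` contains watched equations `g, h` with `g, h, g+h ∉ span U`, then at least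
three quarters of the equations `f ∈ ⟨C⟩` satisfy `f ∉ span U` and `f+𝟏 ∉ span U`. -/
theorem stmt18 {n : ℕ} (U : Set (Eqn n)) (C : Clause n) (hC : NonTaut C)
    (himp : ∀ f ∈ linneg C, f + oneEq n ∉ spn U)
    (g h : Eqn n) (hg : g ∈ linneg C) (hh : h ∈ linneg C)
    (hgW : g ∉ spn U) (hhW : h ∉ spn U) (hghW : g + h ∉ spn U) :
    3 * Nat.card (linneg C : Set (Eqn n)) ≤
      4 * Nat.card {f : Eqn n | f ∈ linneg C ∧ f ∉ spn U ∧ f + oneEq n ∉ spn U} := by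
  classical
  set V := linneg C with hV
  set W := spn U with hW
  set K := V ⊓ W with hKdef
  have key : ∀ a b : ZMod 2, a • g + b • h ∈ W → a = 0 ∧ b = 0 := by
    intro a b hab
    have h01 : ∀ x : ZMod 2, x = 0 ∨ x = 1 := by decide
    rcases h01 a with rfl | rfl <;> rcases h01 b with rfl | rfl <;>
      simp_all [one_smul, zero_smul] <;>
      first | exact hgW hab | exact hhW hab | exact hghW hab
  have hKV : K ≤ V := inf_le_left
  have hKW : K ≤ W := inf_le_right
  let F : (↥K × ZMod 2 × ZMod 2) → (V : Set (Eqn n)) :=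
    fun p => ⟨(p.1 : Eqn n) + p.2.1 • g + p.2.2 • h,
      add_mem (add_mem (hKV p.1.2) (Submodule.smul_mem _ _ hg)) (Submodule.smul_mem _ _ hh)⟩
  have hinj : Function.Injective F := by
    rintro ⟨⟨k1, hk1⟩, a1, b1⟩ ⟨⟨k2, hk2⟩, a2, b2⟩ heq
    have heq' : k1 + a1 • g + b1 • h = k2 + a2 • g + b2 • h := by
      simpa [F] using congrArg Subtype.val heq
    have hid : (a1 - a2) • g + (b1 - b2) • h =
        (k1 + a1 • g + b1 • h) - (k2 + a2 • g + b2 • h) + (k2 - k1) := by module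
    have hmem : (a1 - a2) • g + (b1 - b2) • h ∈ W := by
      rw [hid, heq', sub_self, zero_add]
      exact sub_mem (hKW hk2) (hKW hk1)
    obtain ⟨ha, hb⟩ := key _ _ hmem
    have ha' : a1 = a2 := sub_eq_zero.mp ha
    have hb' : b1 = b2 := sub_eq_zero.mp hb
    subst ha' hb'
    have hk : k1 = k2 := by
      have := heq'
      have h2 := add_right_cancel this
      exact add_right_cancel h2
    subst hk
    rfl
  have hcard : Nat.card ((↥K × ZMod 2 × ZMod 2)) ≤
      Nat.card (V : Set (Eqn n)) := Nat.card_le_card_of_injective F hinj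
  have hprod : Nat.card ((↥K × ZMod 2 × ZMod 2)) =
      Nat.card ↥K * 4 := by
    rw [Nat.card_prod, Nat.card_prod]
    have : Nat.card (ZMod 2) = 2 := by
      rw [Nat.card_eq_fintype_card]; rfl
    rw [this]
  have hset : {f : Eqn n | f ∈ V ∧ f ∉ W ∧ f + oneEq n ∉ W} =
      (V : Set (Eqn n)) \ (K : Set (Eqn n)) := by
    ext f
    simp only [Set.mem_setOf_eq, Set.mem_diff, SetLike.mem_coe, hKdef, Submodule.mem_inf]
    constructor
    · rintro ⟨h1, h2, h3⟩; exact ⟨h1, fun hc => h2 hc.2⟩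
    · rintro ⟨h1, h2⟩; exact ⟨h1, fun hw => h2 ⟨h1, hw⟩, himp f h1⟩
  rw [hset]
  have hsub : (K : Set (Eqn n)) ⊆ (V : Set (Eqn n)) := hKV
  have hdiff : ((V : Set (Eqn n)) \ (K : Set (Eqn n))).ncard =
      (V : Set (Eqn n)).ncard - (K : Set (Eqn n)).ncard :=
    Set.ncard_diff hsub (Set.toFinite _)
  have hle : (K : Set (Eqn n)).ncard ≤ (V : Set (Eqn n)).ncard :=
    Set.ncard_le_ncard hsub (Set.toFinite _)
  have hKeq : Nat.card ↥K = (K : Set (Eqn n)).ncard := Nat.card_coe_set_eq _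
  have hVeq : Nat.card (V : Set (Eqn n)) = (V : Set (Eqn n)).ncard := Nat.card_coe_set_eq _
  have hDeq : Nat.card ((V : Set (Eqn n)) \ (K : Set (Eqn n)) : Set (Eqn n)) =
      ((V : Set (Eqn n)) \ (K : Set (Eqn n))).ncard := Nat.card_coe_set_eq _
  rw [hprod, hKeq, hVeq] at hcard
  rw [hVeq, hDeq, hdiff]
  omega

end XorSAT
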